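/- Let F = (a, b; c, d) ∈ SL(2,ℂ), define x₀, x₁, x₂, x₃ ∈ ℝ by F·conj(F)ᵗ = (x₀+x₃, x₁+i·x₂; x₁−i·x₂, x₀−x₃), and let f = (x₁, x₂, x₃)/(x₀+1) ∈ ℝ³. Let φ : ℝ³ \ {(0,0,1)} → ℝ³ be the map φ(y₁,y₂,y₃) = 2·(y₁, y₂, 1−y₃)/|(y₁, y₂, 1−y₃)|² − (0,0,1). Then f ≠ (0,0,1) and φ(f) = (Re u, Im u, v), where u = (a·conj(c) + b·conj(d))/(|c|² + |d|²) and v = 1/(|c|² + |d|²). -/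

import Mathlib

/-!
STATEMENT 12: Converting the ball-model Bryant representation formula to the
half-space formula via the isometry `φ` from the Poincaré ball to upper half
space: `φ(f) = (Re u, Im u, v)`.
-/

open Matrix Complex

theorem ball_to_halfspace_formula
    (a b c d : ℂ) (hdet : a * d - b * c = 1)
    (x₀ x₁ x₂ x₃ : ℝ)
    (hHerm : (!![a, b; c, d] : Matrix (Fin 2) (Fin 2) ℂ) * (!![a, b; c, d]).conjTranspose =
      !![(x₀ : ℂ) + (x₃ : ℂ), (x₁ : ℂ) + (x₂ : ℂ) * Complex.I;
         (x₁ : ℂ) - (x₂ : ℂ) * Complex.I, (x₀ : ℂ) - (x₃ : ℂ)])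
    (f : Fin 3 → ℝ)
    (hf : f = fun i => (![x₁, x₂, x₃] : Fin 3 → ℝ) i / (x₀ + 1))
    (φ : (Fin 3 → ℝ) → (Fin 3 → ℝ))
    (hφ : ∀ y : Fin 3 → ℝ,
      φ y = (2 / ((y 0) ^ 2 + (y 1) ^ 2 + (1 - y 2) ^ 2)) • ![y 0, y 1, 1 - y 2] - ![0, 0, 1])
    (u : ℂ)
    (hu : u = (a * (starRingEnd ℂ) c + b * (starRingEnd ℂ) d) /
      ((‖c‖ ^ 2 + ‖d‖ ^ 2 : ℝ) : ℂ))
    (v : ℝ)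
    (hv : v = 1 / (‖c‖ ^ 2 + ‖d‖ ^ 2)) :
    f ≠ ![0, 0, 1] ∧ φ f = ![u.re, u.im, v] := by
  have h00 := congr_fun (congr_fun hHerm 0) 0
  have h01 := congr_fun (congr_fun hHerm 0) 1
  have h10 := congr_fun (congr_fun hHerm 1) 0
  have h11 := congr_fun (congr_fun hHerm 1) 1
  simp only [Matrix.mul_apply, Fin.sum_univ_two, Matrix.conjTranspose_apply,
    Matrix.cons_val', Matrix.cons_val_zero, Matrix.cons_val_one, Matrix.head_cons,
    Matrix.head_fin_const, Matrix.empty_val', Matrix.cons_val_fin_one,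
    Matrix.of_apply, RCLike.star_def] at h00 h01 h10 h11
  have habs : ∀ z : ℂ, z * (starRingEnd ℂ) z = ((‖z‖ ^ 2 : ℝ) : ℂ) := by
    intro z
    rw [Complex.mul_conj, Complex.sq_norm]
  -- n = |c|^2 + |d|^2 = x₀ - x₃
  have hn : (‖c‖ ^ 2 + ‖d‖ ^ 2 : ℝ) = x₀ - x₃ := by
    have h := h11
    rw [habs, habs, ← Complex.ofReal_add] at h
    exact_mod_cast h
  have hm : (‖a‖ ^ 2 + ‖b‖ ^ 2 : ℝ) = x₀ + x₃ := by
    have h := h00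
    rw [habs, habs, ← Complex.ofReal_add] at h
    exact_mod_cast h
  -- n > 0
  have hcd : c ≠ 0 ∨ d ≠ 0 := by
    by_contra h
    push_neg at h
    rw [h.1, h.2] at hdet
    simp at hdet
  have hnpos : (0 : ℝ) < ‖c‖ ^ 2 + ‖d‖ ^ 2 := by
    rcases hcd with h | h
    · have h1 : 0 < ‖c‖ := norm_pos_iff.mpr h
      positivity
    · have h1 : 0 < ‖d‖ := norm_pos_iff.mpr h
      positivity
  have hnpos' : (0 : ℝ) < x₀ - x₃ := hn ▸ hnpos
  have hmnn : (0 : ℝ) ≤ x₀ + x₃ := by rw [← hm]; positivity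
  have hs : (0 : ℝ) < x₀ + 1 := by linarith
  -- real/imag parts: x₁, x₂
  have hx1 : (a * (starRingEnd ℂ) c + b * (starRingEnd ℂ) d).re = x₁ := by
    rw [h01]; simp
  have hx2 : (a * (starRingEnd ℂ) c + b * (starRingEnd ℂ) d).im = x₂ := by
    rw [h01]; simp
  -- determinant identity
  have hdetc : (starRingEnd ℂ) a * (starRingEnd ℂ) d - (starRingEnd ℂ) b * (starRingEnd ℂ) c = 1 := by
    have := congrArg (starRingEnd ℂ) hdet
    simpa using this
  have hdetC : ((x₀ : ℂ) + x₃) * ((x₀ : ℂ) - x₃) - ((x₁ : ℂ) + x₂ * I) * ((x₁ : ℂ) - x₂ * I) = 1 := by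
    rw [← h00, ← h01, ← h10, ← h11]
    linear_combination ((starRingEnd ℂ) a * (starRingEnd ℂ) d - (starRingEnd ℂ) b * (starRingEnd ℂ) c) * hdet + hdetc
  have hdetR : x₀ ^ 2 - x₃ ^ 2 - x₁ ^ 2 - x₂ ^ 2 = 1 := by
    have h2 : ((x₀ ^ 2 - x₃ ^ 2 - x₁ ^ 2 - x₂ ^ 2 : ℝ) : ℂ) = 1 := by
      push_cast
      linear_combination hdetC - (x₂ : ℂ) ^ 2 * Complex.I_sq
    exact_mod_cast h2
  -- f ≠ (0,0,1)
  have hfne : f ≠ ![0, 0, 1] := by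
    intro h
    have h2 := congr_fun h 2
    rw [hf] at h2
    simp at h2
    have : x₃ = x₀ + 1 := by
      field_simp at h2
      linarith [h2]
    linarith
  refine ⟨hfne, ?_⟩
  -- denominator identity
  have hD : (x₁ / (x₀ + 1)) ^ 2 + (x₂ / (x₀ + 1)) ^ 2 + (1 - x₃ / (x₀ + 1)) ^ 2
      = 2 * (x₀ - x₃) / (x₀ + 1) := by
    field_simp
    ring_nf
    nlinarith [hdetR]
  have hu_re : u.re = x₁ / (x₀ - x₃) := by
    rw [hu, hn, Complex.div_ofReal_re, hx1]
  have hu_im : u.im = x₂ / (x₀ - x₃) := by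
    rw [hu, hn, Complex.div_ofReal_im, hx2]
  have hv' : v = 1 / (x₀ - x₃) := by rw [hv, hn]
  rw [hφ, hf]
  funext i
  fin_cases i <;>
    simp [hD, hu_re, hu_im, hv'] <;>
    field_simp <;>
    ring
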